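/- For every integer n ≥ 0 there exist constants C_n, D_n (independent of σ₀, σ₁) such that for all σ₀, σ₁ ∈ {-1,1}^k: ∑_{σ ∈ {-1,1}^k} (σ·σ₀)² (σ·σ₁)^{2n} = C_n (σ₀·σ₁)² + D_n. -/

import Mathlib

open Finset Real

/-- The real sign of a Boolean spin: `true ↦ 1`, `false ↦ -1`. -/
noncomputable def sgn (b : Bool) : ℝ := if b then 1 else -1

/-- Standard inner product of two spin vectors in `{-1,1}^k`. -/
noncomputable def sdot {k : ℕ} (σ τ : Fin k → Bool) : ℝ := ∑ i, sgn (σ i) * sgn (τ i)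

lemma sgn_mul_self (b : Bool) : sgn b * sgn b = 1 := by
  cases b <;> simp [sgn]

lemma sgn_beq (a b : Bool) : sgn (a == b) = sgn a * sgn b := by
  cases a <;> cases b <;> simp [sgn]

/-- Permutation symmetry: the pair correlation is the same for any off-diagonal pair. -/
lemma pair_sum (k n : ℕ) (h0 : 0 < k) (h1 : 1 < k) (i j : Fin k) (hij : i ≠ j) :
    ∑ ρ : Fin k → Bool, sgn (ρ i) * sgn (ρ j) * (∑ l, sgn (ρ l)) ^ (2 * n)
    = ∑ ρ : Fin k → Bool,
        sgn (ρ ⟨0, h0⟩) * sgn (ρ ⟨1, h1⟩) * (∑ l, sgn (ρ l)) ^ (2 * n) := by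
  set i0 : Fin k := ⟨0, h0⟩
  set i1 : Fin k := ⟨1, h1⟩
  have h01 : i0 ≠ i1 := by simp [i0, i1, Fin.ext_iff]
  set j₂ : Fin k := (Equiv.swap i0 i) j with hj₂
  have hj₂j : (Equiv.swap i0 i) j₂ = j := by rw [hj₂, Equiv.swap_apply_self]
  have hj₂0 : j₂ ≠ i0 := by
    intro h
    rw [h, Equiv.swap_apply_left] at hj₂j
    exact hij hj₂j
  set pp : Equiv.Perm (Fin k) := (Equiv.swap i1 j₂).trans (Equiv.swap i0 i) with hpp
  have hπ0 : pp i0 = i := by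
    have h2 : (Equiv.swap i1 j₂) i0 = i0 :=
      Equiv.swap_apply_of_ne_of_ne h01 (Ne.symm hj₂0)
    simp [hpp, Equiv.trans_apply, h2, Equiv.swap_apply_left]
  have hπ1 : pp i1 = j := by
    have h2 : (Equiv.swap i1 j₂) i1 = j₂ := Equiv.swap_apply_left _ _
    simp [hpp, Equiv.trans_apply, h2, hj₂j]
  -- reindex the sum by ρ ↦ ρ ∘ π
  have := Equiv.sum_comp (Equiv.arrowCongr pp (Equiv.refl Bool)).symm
    (fun ρ : Fin k → Bool =>
      sgn (ρ i0) * sgn (ρ i1) * (∑ l, sgn (ρ l)) ^ (2 * n))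
  rw [← this]
  apply Finset.sum_congr rfl
  intro ρ _
  have hcomp : ∀ x : Fin k,
      ((Equiv.arrowCongr pp (Equiv.refl Bool)).symm ρ) x = ρ (pp x) := by
    intro x; simp [Equiv.arrowCongr]
  simp only [hcomp, hπ0, hπ1]
  congr 2
  exact (Equiv.sum_comp pp (fun l => sgn (ρ l))).symm

theorem stmt16 (k : ℕ) (hk : 2 ≤ k) (n : ℕ) :
    ∃ C D : ℝ, ∀ σ₀ σ₁ : Fin k → Bool,
      ∑ σ : Fin k → Bool, (sdot σ σ₀) ^ 2 * (sdot σ σ₁) ^ (2 * n) =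
        C * (sdot σ₀ σ₁) ^ 2 + D := by
  have h0 : 0 < k := by omega
  have h1 : 1 < k := by omega
  set i0 : Fin k := ⟨0, h0⟩
  set i1 : Fin k := ⟨1, h1⟩
  set Hd : ℝ := ∑ ρ : Fin k → Bool, (∑ l, sgn (ρ l)) ^ (2 * n) with hHd
  set Ho : ℝ := ∑ ρ : Fin k → Bool,
      sgn (ρ i0) * sgn (ρ i1) * (∑ l, sgn (ρ l)) ^ (2 * n) with hHo
  refine ⟨Ho, (k : ℝ) * (Hd - Ho), ?_⟩
  intro σ₀ σ₁
  set ε : Fin k → ℝ := fun i => sgn (σ₀ i) * sgn (σ₁ i) with hε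
  have hεsq : ∀ i, ε i * ε i = 1 := by
    intro i; simp only [hε]
    cases h : σ₀ i <;> cases h' : σ₁ i <;> norm_num [sgn]
  -- change of variables: flip σ by σ₁
  have hinv : Function.Involutive (fun (ρ : Fin k → Bool) => fun i => ρ i == σ₁ i) := by
    intro ρ; funext i; simp only []; cases ρ i <;> cases σ₁ i <;> rfl
  set e : (Fin k → Bool) ≃ (Fin k → Bool) := hinv.toPerm _ with he
  have step1 : ∑ σ : Fin k → Bool, (sdot σ σ₀) ^ 2 * (sdot σ σ₁) ^ (2 * n)
      = ∑ ρ : Fin k → Bool, (∑ i, ε i * sgn (ρ i)) ^ 2 * (∑ i, sgn (ρ i)) ^ (2 * n) := by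
    rw [← Equiv.sum_comp e
      (fun σ : Fin k → Bool => (sdot σ σ₀) ^ 2 * (sdot σ σ₁) ^ (2 * n))]
    apply Finset.sum_congr rfl
    intro ρ _
    have h₀ : sdot (e ρ) σ₀ = ∑ i, ε i * sgn (ρ i) := by
      unfold sdot
      apply Finset.sum_congr rfl
      intro i _
      show sgn (ρ i == σ₁ i) * sgn (σ₀ i) = ε i * sgn (ρ i)
      rw [sgn_beq, hε]; ring
    have h₁ : sdot (e ρ) σ₁ = ∑ i, sgn (ρ i) := by
      unfold sdot
      apply Finset.sum_congr rfl
      intro i _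
      show sgn (ρ i == σ₁ i) * sgn (σ₁ i) = sgn (ρ i)
      rw [sgn_beq, mul_assoc, sgn_mul_self, mul_one]
    rw [h₀, h₁]
  rw [step1]
  -- expand the square and swap sums
  have step2 : ∀ ρ : Fin k → Bool,
      (∑ i, ε i * sgn (ρ i)) ^ 2 * (∑ i, sgn (ρ i)) ^ (2 * n)
      = ∑ i, ∑ j, ε i * ε j *
          (sgn (ρ i) * sgn (ρ j) * (∑ l, sgn (ρ l)) ^ (2 * n)) := by
    intro ρ
    rw [sq, Finset.sum_mul_sum, Finset.sum_mul]
    apply Finset.sum_congr rfl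
    intro i _
    rw [Finset.sum_mul]
    apply Finset.sum_congr rfl
    intro j _
    ring
  simp_rw [step2]
  rw [Finset.sum_comm]
  have step3 : ∀ i : Fin k,
      ∑ ρ : Fin k → Bool, ∑ j, ε i * ε j *
          (sgn (ρ i) * sgn (ρ j) * (∑ l, sgn (ρ l)) ^ (2 * n))
      = ∑ j, ε i * ε j * (if i = j then Hd else Ho) := by
    intro i
    rw [Finset.sum_comm]
    apply Finset.sum_congr rfl
    intro j _
    rw [← Finset.mul_sum]
    congr 1
    by_cases hij : i = j
    · subst hij
      simp only [if_pos rfl, hHd]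
      apply Finset.sum_congr rfl
      intro ρ _
      rw [sgn_mul_self, one_mul]
    · rw [if_neg hij]
      exact pair_sum k n h0 h1 i j hij
  simp_rw [step3]
  -- final algebra
  have hsd : sdot σ₀ σ₁ = ∑ i, ε i := rfl
  have key : ∀ i j : Fin k, ε i * ε j * (if i = j then Hd else Ho)
      = ε i * ε j * Ho + (if i = j then (Hd - Ho) else 0) := by
    intro i j
    by_cases hij : i = j
    · subst hij
      rw [hεsq i, if_pos rfl, if_pos rfl]
      ring
    · simp [hij]
  simp_rw [key, Finset.sum_add_distrib]
  have hA : ∑ i : Fin k, ∑ j : Fin k, ε i * ε j * Ho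
      = Ho * (∑ i, ε i) ^ 2 := by
    rw [sq, Finset.sum_mul_sum, Finset.mul_sum]
    apply Finset.sum_congr rfl
    intro i _
    rw [Finset.mul_sum]
    apply Finset.sum_congr rfl
    intro j _
    ring
  have hB : ∑ i : Fin k, ∑ j : Fin k, (if i = j then Hd - Ho else 0)
      = (k : ℝ) * (Hd - Ho) := by
    simp [Finset.sum_ite_eq, Finset.sum_const, Finset.card_univ, nsmul_eq_mul]
    ring
  rw [hA, hB, hsd]
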